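/- Every finite tournament T has a vertex v with |N⁺⁺(v)| ≥ |N⁺(v)|. This follows from the generalized theorem by setting A = B = {(u,v) : u = v or (u,v) ∈ E(T)} and ω ≡ 1. -/

import Mathlib

open Finset
open scoped Classical
noncomputable section

/-- Out-neighbourhood of `v` in the digraph/relation `A`. -/
def outs {V : Type} [Fintype V] (A : V → V → Prop) (v : V) : Finset V :=
  Finset.univ.filter (fun u => A v u)

/-- In-neighbourhood of `v` in the digraph/relation `A`. -/
def ins {V : Type} [Fintype V] (A : V → V → Prop) (v : V) : Finset V :=
  Finset.univ.filter (fun u => A u v)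

/-- Second out-neighbourhood: `(⋃_{u ∈ N⁺(v)} N⁺(u)) \ N⁺(v)`. -/
def souts {V : Type} [Fintype V] (A : V → V → Prop) (v : V) : Finset V :=
  (Finset.univ.filter (fun w => ∃ u, A v u ∧ A u w)) \ outs A v

/-- Relational product `AB`. -/
def rprod {V : Type} (A B : V → V → Prop) : V → V → Prop :=
  fun u v => ∃ w, A u w ∧ B w v

/-- Transpose of a relation. -/
def tr {V : Type} (A : V → V → Prop) : V → V → Prop := fun u v => A v u

/-- Weight of a finite set of vertices. -/
def wt {V : Type} {M : Type} [AddCommMonoid M] (ω : V → M) (S : Finset V) : M :=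
  ∑ x ∈ S, ω x

namespace SNCAux

variable {V : Type}

/-- number of forward pairs of a list w.r.t. `T` -/
def phi (T : V → V → Prop) : List V → ℕ
  | [] => 0
  | x :: xs => xs.countP (fun y => decide (T x y)) + phi T xs

/-- number of forward cross pairs between two lists -/
def cross (T : V → V → Prop) (xs ys : List V) : ℕ :=
  (xs.map (fun x => ys.countP (fun y => decide (T x y)))).sum

lemma cross_nil (T : V → V → Prop) (ys : List V) : cross T [] ys = 0 := rfl

lemma cross_cons (T : V → V → Prop) (x : V) (xs ys : List V) :
    cross T (x :: xs) ys = ys.countP (fun y => decide (T x y)) + cross T xs ys := by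
  simp [cross]

lemma cross_append_right (T : V → V → Prop) (xs ys zs : List V) :
    cross T xs (ys ++ zs) = cross T xs ys + cross T xs zs := by
  induction xs with
  | nil => simp [cross_nil]
  | cons x xs ih => simp [cross_cons, ih, List.countP_append]; omega

lemma cross_singleton_right (T : V → V → Prop) (xs : List V) (z : V) :
    cross T xs [z] = xs.countP (fun x => decide (T x z)) := by
  induction xs with
  | nil => simp [cross_nil]
  | cons x xs ih =>
      simp only [cross_cons, ih, List.countP_cons]
      simp [List.countP_nil]
      omega

lemma phi_cons (T : V → V → Prop) (x : V) (xs : List V) :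
    phi T (x :: xs) = xs.countP (fun y => decide (T x y)) + phi T xs := rfl

lemma phi_append (T : V → V → Prop) (xs ys : List V) :
    phi T (xs ++ ys) = phi T xs + phi T ys + cross T xs ys := by
  induction xs with
  | nil => simp [phi, cross_nil]
  | cons x xs ih =>
      simp only [List.cons_append, phi_cons, ih, cross_cons, List.countP_append]
      omega

/-- Exchange (medianness) lemma: in a forward-count-maximizing list, for any
decomposition `l = a ++ b ++ z :: c`, vertex `z` has at least as many dominators
as dominatees within the block `b` immediately preceding it. -/
lemma exchange (T : V → V → Prop) (l : List V)
    (hmax : ∀ m, m.Perm l → phi T m ≤ phi T l)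
    (a b c : List V) (z : V) (hl : l = a ++ (b ++ z :: c)) :
    b.countP (fun x => decide (T z x)) ≤ b.countP (fun x => decide (T x z)) := by
  have hperm : (a ++ (z :: (b ++ c))).Perm l := by
    rw [hl]
    exact (List.perm_middle.symm).append_left a
  have h := hmax _ hperm
  rw [hl] at h
  have hzc : (z :: c) = [z] ++ c := rfl
  have hzbc : (z :: (b ++ c)) = [z] ++ (b ++ c) := rfl
  rw [hzc, hzbc] at h
  simp only [phi_append, cross_append_right, cross_singleton_right] at h
  have hphiz : phi T [z] = 0 := by simp [phi]
  rw [hphiz] at h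
  have hcz : cross T [z] b = b.countP (fun x => decide (T z x)) := by
    simp [cross_cons, cross_nil]
  have hcz2 : cross T [z] c = c.countP (fun x => decide (T z x)) := by
    simp [cross_cons, cross_nil]
  rw [hcz, hcz2] at h
  omega

lemma dropWhile_head_false {p : V → Bool} :
    ∀ (t : List V) {z : V} {d : List V}, t.dropWhile p = z :: d → p z = false := by
  intro t
  induction t with
  | nil => intro z d h; simp at h
  | cons x xs ih =>
      intro z d h
      by_cases hx : p x
      · rw [List.dropWhile_cons_of_pos hx] at h; exact ih h
      · rw [List.dropWhile_cons_of_neg hx] at h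
        cases h; simpa using hx

end SNCAux

open SNCAux

/-- Fisher's theorem: every finite tournament has a vertex `v` with `|N⁺⁺(v)| ≥ |N⁺(v)|`. -/
theorem tournament_snc
    {V : Type} [Fintype V] [Nonempty V] (T : V → V → Prop)
    (hT1 : ∀ u v, T u v → ¬ T v u)
    (hT2 : ∀ u v, u ≠ v → T u v ∨ T v u) :
    ∃ v, (souts T v).card ≥ (outs T v).card := by
  classical
  -- a median list: permutation of all vertices maximizing phi
  have huniv_mem : (Finset.univ : Finset V).toList ∈
      ((Finset.univ : Finset V).toList.permutations).toFinset := by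
    simp [List.mem_toFinset, List.mem_permutations]
  obtain ⟨l, hlmem, hlmax'⟩ := Finset.exists_max_image
    ((Finset.univ : Finset V).toList.permutations).toFinset (phi T) ⟨_, huniv_mem⟩
  have hlperm : l.Perm (Finset.univ : Finset V).toList := by
    rw [List.mem_toFinset, List.mem_permutations] at hlmem; exact hlmem
  have hmax : ∀ m, m.Perm l → phi T m ≤ phi T l := by
    intro m hm
    exact hlmax' m (by rw [List.mem_toFinset, List.mem_permutations]; exact hm.trans hlperm)
  have hlne : l ≠ [] := by
    intro h
    have : (Finset.univ : Finset V).toList = [] := by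
      have := hlperm; rw [h] at this; exact (List.Perm.nil_eq this).symm
    have h2 : (Finset.univ : Finset V) = ∅ := by
      rwa [← Finset.toList_eq_nil]
    exact (Finset.univ_nonempty (α := V)).ne_empty h2
  set v := l.getLast hlne with hv_def
  have hvlast : l.getLast? = some v := List.getLast?_eq_getLast hlne
  -- predicates
  set F : V → Prop := fun x => T v x with hF_def
  set G : V → Prop := fun x => (∃ u, T v u ∧ T u x) ∧ ¬ T v x with hG_def
  have hFv : ¬ F v := fun h => hT1 v v h h
  have hGv : ¬ G v := by
    rintro ⟨⟨u, hvu, huv⟩, -⟩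
    exact (hT1 u v huv) hvu
  -- dominance of z over F for badv z
  have hdom : ∀ z : V, ¬ F z → ¬ G z → ∀ x : V, F x → T z x := by
    intro z hFz hGz x hFx
    by_cases hzv : z = v
    · subst hzv; exact hFx
    · have hxz : ¬ T x z := by
        intro hxz
        exact hGz ⟨⟨x, hFx, hxz⟩, hFz⟩
      have hxne : x ≠ z := by
        intro h; rw [h] at hFx; exact hFz hFx
      rcases hT2 x z hxne with h | h
      · exact absurd h hxz
      · exact h
  -- main block-counting lemma
  have key : ∀ N (s a : List V), s.length ≤ N → l = a ++ s →
      (s = [] ∨ s.getLast? = some v) →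
      s.countP (fun x => decide (F x)) ≤ s.countP (fun x => decide (G x)) := by
    intro N
    induction N with
    | zero =>
        intro s a hlen _ _
        have : s = [] := List.length_eq_zero_iff.mp (Nat.le_zero.mp hlen)
        subst this; simp
    | succ N ih =>
        intro s a hlen hsplit hend
        by_cases hs : s = []
        · subst hs; simp
        · have hendv : s.getLast? = some v := hend.resolve_left hs
          -- split off the first badv element
          set p : V → Bool := fun x => decide (F x ∨ G x) with hp_def
          set bl := s.takeWhile p with hbl_def
          set rest := s.dropWhile p with hrest_def
          have hsbl : bl ++ rest = s := List.takeWhile_append_dropWhile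
          have hrest_ne : rest ≠ [] := by
            intro hnil
            have hsb : s = bl := by rw [← hsbl, hnil, List.append_nil]
            have hvmem : v ∈ s := by
              have := List.getLast_mem hs
              have hgl : s.getLast hs = v := by
                have := List.getLast?_eq_getLast hs
                rw [hendv] at this
                exact (Option.some_injective _ this.symm)
              rwa [hgl] at this
            have : p v = true := List.mem_takeWhile_imp (by rwa [hsb] at hvmem)
            rw [hp_def] at this
            simp only [decide_eq_true_eq] at this
            rcases this with h | h
            · exact hFv h
            · exact hGv h
          obtain ⟨z, d, hzd⟩ := List.exists_cons_of_ne_nil hrest_ne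
          have hpz : p z = false := dropWhile_head_false s (by rw [← hrest_def, hzd])
          have hFz : ¬ F z := by
            intro h
            have : p z = true := by
              rw [hp_def]; simp only [decide_eq_true_eq]; exact Or.inl h
            rw [hpz] at this; exact absurd this (by simp)
          have hGz : ¬ G z := by
            intro h
            have : p z = true := by
              rw [hp_def]; simp only [decide_eq_true_eq]; exact Or.inr h
            rw [hpz] at this; exact absurd this (by simp)
          have hs_eq : s = bl ++ z :: d := by rw [← hsbl, hzd]
          -- medianness for block bl ending at z
          have hexch := exchange T l hmax a bl d z (by rw [hsplit, hs_eq])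
          -- F-count in block ≤ dominated count
          have h1 : bl.countP (fun x => decide (F x)) ≤ bl.countP (fun x => decide (T z x)) := by
            apply List.countP_mono_left
            intro x _ hx
            simp only [decide_eq_true_eq] at hx ⊢
            exact hdom z hFz hGz x hx
          -- dominator count ≤ G-count in block
          have h2 : bl.countP (fun x => decide (T x z)) ≤ bl.countP (fun x => decide (G x)) := by
            apply List.countP_mono_left
            intro x hxbl hx
            simp only [decide_eq_true_eq] at hx ⊢
            have hpx : p x = true := List.mem_takeWhile_imp (by rw [hbl_def] at hxbl; exact hxbl)
            rw [hp_def] at hpx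
            simp only [decide_eq_true_eq] at hpx
            rcases hpx with hFx | hGx
            · exact absurd hx (hT1 z x (hdom z hFz hGz x hFx))
            · exact hGx
          have hblock : bl.countP (fun x => decide (F x)) ≤ bl.countP (fun x => decide (G x)) :=
            le_trans h1 (le_trans hexch h2)
          -- recurse on d
          have hlen_d : d.length ≤ N := by
            have : s.length = bl.length + (d.length + 1) := by
              rw [hs_eq]; simp [List.length_append]
            omega
          have hsplit_d : l = (a ++ (bl ++ [z])) ++ d := by
            rw [hsplit, hs_eq]; simp [List.append_assoc]
          have hend_d : d = [] ∨ d.getLast? = some v := by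
            by_cases hd : d = []
            · exact Or.inl hd
            · right
              have : s.getLast? = d.getLast? := by
                rw [hs_eq, show z :: d = [z] ++ d from rfl, ← List.append_assoc]
                exact List.getLast?_append_of_ne_nil _ hd
              rw [← this]; exact hendv
          have hrec := ih d (a ++ (bl ++ [z])) hlen_d hsplit_d hend_d
          -- combine
          have hcF : s.countP (fun x => decide (F x))
              = bl.countP (fun x => decide (F x)) + d.countP (fun x => decide (F x)) := by
            rw [hs_eq, List.countP_append, List.countP_cons]
            simp [hFz]
          have hcG : s.countP (fun x => decide (G x))
              = bl.countP (fun x => decide (G x)) + d.countP (fun x => decide (G x)) := by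
            rw [hs_eq, List.countP_append, List.countP_cons]
            simp [hGz]
          rw [hcF, hcG]
          omega
  have hmain := key l.length l [] le_rfl rfl (Or.inr hvlast)
  -- convert list counts to finset cards
  have hcard : ∀ P : V → Prop, (Finset.univ.filter P).card
      = l.countP (fun x => decide (P x)) := by
    intro P
    have h1 : (Finset.univ.filter P).card = Multiset.countP P (Finset.univ : Finset V).val := by
      rw [Multiset.countP_eq_card_filter, Finset.card_def, Finset.filter_val]
    have h2 : Multiset.countP P (Finset.univ : Finset V).val
        = (Finset.univ : Finset V).toList.countP (fun x => decide (P x)) := by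
      rw [← Finset.coe_toList (Finset.univ : Finset V), Multiset.coe_countP]
    rw [h1, h2]
    exact (List.Perm.countP_eq _ hlperm).symm
  have houts : (outs T v).card = l.countP (fun x => decide (F x)) := by
    rw [outs, hcard]
  have hsouts : (souts T v).card = l.countP (fun x => decide (G x)) := by
    have : souts T v = @Finset.filter V G (fun a => Classical.propDecidable (G a)) Finset.univ := by
      ext x
      simp only [souts, outs, Finset.mem_sdiff, Finset.mem_filter, Finset.mem_univ, true_and,
        hG_def]
    rw [this]
    have h := hcard G
    rwa [show (fun x => @decide (G x) (Classical.propDecidable (G x)))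
        = (fun x => decide (G x)) from funext fun x => decide_eq_decide.mpr Iff.rfl] at h
  refine ⟨v, ?_⟩
  rw [ge_iff_le, houts, hsouts]
  exact hmain
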